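/- For every d ≥ 1, the Kautz digraph Ka(d, 2) is a mixed Moore graph of diameter 2 with undirected degree r = 1 and directed degree z = d − 1. Precisely, let V = {(a, b) ∈ Fin (d+1) × Fin (d+1) : a ≠ b} and define E (a,b) (x,y) ⟺ x = b. Then: |V| = d(d + 1) = ((d−1) + 1)² + (d−1) + 1; every vertex (a,b) has exactly one vertex w with E (a,b) w ∧ E w (a,b) (namely (b,a)) and exactly d − 1 vertices w with E (a,b) w ∧ ¬E w (a,b); and for all distinct u, v ∈ V, either E u v or there exists w ∈ V with E u w ∧ E w v. -/

import Mathlib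

/-- The vertices of the Kautz digraph `Ka(d, 2)`: words of length 2 over an
alphabet of `d + 1` letters with distinct letters. -/
def KautzVertex (d : ℕ) : Type := {p : Fin (d + 1) × Fin (d + 1) // p.1 ≠ p.2}

instance (d : ℕ) : Fintype (KautzVertex d) := Subtype.fintype _

instance (d : ℕ) : DecidableEq (KautzVertex d) := Subtype.instDecidableEq

/-- Adjacency in the Kautz digraph `Ka(d, 2)`: there is an arc from `ab` to `bc`. -/
def KautzAdj (d : ℕ) (u v : KautzVertex d) : Prop := v.1.1 = u.1.2

instance (d : ℕ) : DecidableRel (KautzAdj d) := fun _ _ => decEq _ _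

/-- For every `d ≥ 1`, the Kautz digraph `Ka(d, 2)` is a mixed Moore graph of
diameter 2 with undirected degree `r = 1` and directed degree `z = d - 1`:
it has order `d(d+1) = ((d-1)+1)² + (d-1) + 1`, every vertex `(a, b)` has
exactly one undirected neighbour (namely `(b, a)`) and exactly `d - 1` purely
directed out-neighbours, and it has diameter at most 2. -/
theorem kautz_is_mixed_moore (d : ℕ) (hd : 1 ≤ d) :
    Fintype.card (KautzVertex d) = d * (d + 1) ∧
    d * (d + 1) = ((d - 1) + 1) ^ 2 + (d - 1) + 1 ∧
    (∀ u : KautzVertex d,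
      (Finset.univ.filter fun w => KautzAdj d u w ∧ KautzAdj d w u) =
        {⟨(u.1.2, u.1.1), u.2.symm⟩}) ∧
    (∀ u : KautzVertex d,
      (Finset.univ.filter fun w => KautzAdj d u w ∧ ¬ KautzAdj d w u).card = d - 1) ∧
    (∀ u v : KautzVertex d, u ≠ v →
      KautzAdj d u v ∨ ∃ w : KautzVertex d, KautzAdj d u w ∧ KautzAdj d w v) := by
  refine ⟨?_, ?_, ?_, ?_, ?_⟩
  case refine_2 =>
    have h : d - 1 + 1 = d := Nat.succ_pred_eq_of_pos hd
    rw [h, sq, Nat.mul_add, Nat.mul_one]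
    omega
  · -- order
    have h1 : Fintype.card {p : Fin (d + 1) × Fin (d + 1) // p.1 = p.2} = d + 1 := by
      have := Fintype.card_of_bijective
        (f := fun a : Fin (d+1) => (⟨(a,a), rfl⟩ : {p : Fin (d + 1) × Fin (d + 1) // p.1 = p.2}))
        ⟨fun a b h => by simpa using congrArg (fun x => x.1.1) h,
         fun p => ⟨p.1.1, by ext <;> simp [p.2]⟩⟩
      rw [← this]; simp
    have h2 := Fintype.card_subtype_compl (fun p : Fin (d + 1) × Fin (d + 1) => p.1 = p.2)
    show Fintype.card {p : Fin (d + 1) × Fin (d + 1) // p.1 ≠ p.2} = d * (d+1)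
    rw [h2, h1]
    simp only [Fintype.card_prod, Fintype.card_fin]
    ring_nf
    omega
  · -- undirected neighbours
    intro u
    ext w
    simp only [Finset.mem_filter, Finset.mem_univ, true_and]
    simp only [KautzAdj]
    constructor
    · rintro ⟨h1, h2⟩
      apply Finset.mem_singleton.mpr
      apply Subtype.ext
      exact Prod.ext h1 h2.symm
    · intro h; obtain rfl := Finset.mem_singleton.mp h; exact ⟨rfl, rfl⟩
  · -- directed out-neighbours
    intro u
    have hb := Finset.card_nbij
      (s := Finset.univ.filter fun w : KautzVertex d => KautzAdj d u w ∧ ¬ KautzAdj d w u)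
      (t := Finset.univ.filter fun c : Fin (d+1) => c ≠ u.1.2 ∧ c ≠ u.1.1)
      (i := fun w => w.1.2)
      (by rintro w hw
          simp only [Finset.mem_coe, Finset.mem_filter, Finset.mem_univ, true_and] at hw ⊢
          simp only [KautzAdj] at hw ⊢
          refine ⟨fun h => w.2 (hw.1.trans h.symm), fun h => hw.2 (h ▸ rfl)⟩)
      (by rintro w hw w' hw' h
          simp only [Finset.mem_coe, Finset.mem_filter, Finset.mem_univ, true_and] at hw hw'
          simp only [KautzAdj] at hw hw'
          apply Subtype.ext; exact Prod.ext (hw.1.trans hw'.1.symm) h)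
      (by rintro c hc
          simp only [Finset.mem_coe, Finset.mem_filter, Finset.mem_univ, true_and] at hc
          refine ⟨⟨(u.1.2, c), fun h => hc.1 h.symm⟩, ?_, rfl⟩
          refine Finset.mem_coe.mpr (Finset.mem_filter.mpr ⟨Finset.mem_univ _, ?_⟩)
          simp only [KautzAdj]
          exact ⟨trivial, fun h => hc.2 h.symm⟩)
    rw [hb]
    have he : (Finset.univ.filter fun c : Fin (d+1) => c ≠ u.1.2 ∧ c ≠ u.1.1) =
        Finset.univ \ {u.1.2, u.1.1} := by
      ext c; simp only [Finset.mem_filter, Finset.mem_univ, true_and,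
        Finset.mem_sdiff, Finset.mem_insert, Finset.mem_singleton]; tauto
    rw [he, Finset.card_sdiff_of_subset (by simp), Finset.card_pair u.2.symm]
    simp
  · -- diameter 2
    intro u v _
    by_cases hc : v.1.1 = u.1.2
    · exact Or.inl hc
    · exact Or.inr ⟨⟨(u.1.2, v.1.1), fun h => hc h.symm⟩, rfl, rfl⟩
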